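/- Fix a packet size d > 0 and SNRs γ_b > γ_e > 0, and define ε_LF(m) = Q(ω_b(m))·Q(ω_e(m)) + (1 − Q(ω_e(m))) as above, where ω_b, ω_e are the FBL auxiliary functions with parameters (d, γ_b) and (d, γ_e). Then the secrecy effective throughput τ_LF(m) = (d/m)·(1 − ε_LF(m)) is quasiconcave in m on the interval [d / C(γ_b), d / C(γ_e)]. -/

import Mathlib

/-- The Gaussian Q-function `Q(x) = ∫ₓ^∞ (1/√(2π)) e^{−t²/2} dt`. -/
noncomputable def gaussianQ (x : ℝ) : ℝ :=
  ∫ t in Set.Ioi x, (Real.sqrt (2 * Real.pi))⁻¹ * Real.exp (-t ^ 2 / 2)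

/-- Shannon capacity `C(γ) = log₂(1+γ)`. -/
noncomputable def Cap (γ : ℝ) : ℝ := Real.logb 2 (1 + γ)

/-- Channel dispersion `V(γ) = 1 − (1+γ)^{−2}`. -/
noncomputable def Vdisp (γ : ℝ) : ℝ := 1 - ((1 + γ) ^ 2)⁻¹

/-- The finite-blocklength auxiliary function
`ω(m,γ) = √(m / V(γ)) · (C(γ) − d/m) · ln 2`. -/
noncomputable def ωfbl (d γ m : ℝ) : ℝ :=
  Real.sqrt (m / Vdisp γ) * (Cap γ - d / m) * Real.log 2

noncomputable def phiG (x : ℝ) : ℝ := (Real.sqrt (2 * Real.pi))⁻¹ * Real.exp (-x ^ 2 / 2)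

noncomputable def Ag (γ : ℝ) : ℝ := Real.log 2 / Real.sqrt (Vdisp γ)
noncomputable def wf (d γ t : ℝ) : ℝ := Ag γ * (Cap γ * t - d / t)
noncomputable def wf1 (d γ t : ℝ) : ℝ := Ag γ * (Cap γ + d / t ^ 2)
noncomputable def wf2 (d γ t : ℝ) : ℝ := Ag γ * (-2 * d / t ^ 3)
noncomputable def Nf (d γb γe t : ℝ) : ℝ :=
  gaussianQ (wf d γe t) * (1 - gaussianQ (wf d γb t))
noncomputable def Nf1 (d γb γe t : ℝ) : ℝ :=
  gaussianQ (wf d γe t) * phiG (wf d γb t) * wf1 d γb t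
    - phiG (wf d γe t) * wf1 d γe t * (1 - gaussianQ (wf d γb t))
noncomputable def Nf2 (d γb γe t : ℝ) : ℝ :=
  -2 * phiG (wf d γe t) * phiG (wf d γb t) * wf1 d γe t * wf1 d γb t
  - gaussianQ (wf d γe t) * wf d γb t * phiG (wf d γb t) * wf1 d γb t ^ 2
  + gaussianQ (wf d γe t) * phiG (wf d γb t) * wf2 d γb t
  + wf d γe t * phiG (wf d γe t) * wf1 d γe t ^ 2 * (1 - gaussianQ (wf d γb t))
  - phiG (wf d γe t) * wf2 d γe t * (1 - gaussianQ (wf d γb t))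
noncomputable def Gf (d γb γe t : ℝ) : ℝ := Nf1 d γb γe t * t - 2 * Nf d γb γe t
noncomputable def Gf1 (d γb γe t : ℝ) : ℝ := Nf2 d γb γe t * t - Nf1 d γb γe t

open MeasureTheory Real Set


lemma phiG_pos (x : ℝ) : 0 < phiG x := by
  have h2 : (0:ℝ) < 2 * Real.pi := by positivity
  exact mul_pos (inv_pos.2 (Real.sqrt_pos.2 h2)) (Real.exp_pos _)

lemma continuous_phiG : Continuous phiG := by
  apply Continuous.mul continuous_const
  exact (Real.continuous_exp.comp (by continuity))

lemma integrable_phiG : Integrable phiG := by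
  have h : phiG = fun t => (Real.sqrt (2 * Real.pi))⁻¹ * Real.exp (-(1/2 : ℝ) * t ^ 2) := by
    funext t; unfold phiG; ring_nf
  rw [h]
  exact (integrable_exp_neg_mul_sq (by norm_num : (0:ℝ) < 1/2)).const_mul _

lemma integral_phiG : ∫ x, phiG x = 1 := by
  unfold phiG
  have h : (fun t : ℝ => (Real.sqrt (2 * Real.pi))⁻¹ * Real.exp (-t ^ 2 / 2))
      = fun t => (Real.sqrt (2 * Real.pi))⁻¹ * Real.exp (-(1/2 : ℝ) * t ^ 2) := by
    funext t; ring_nf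
  rw [h, MeasureTheory.integral_const_mul, integral_gaussian]
  have : Real.pi / (1/2 : ℝ) = 2 * Real.pi := by ring
  rw [this]
  have h2 : Real.sqrt (2 * Real.pi) ≠ 0 := by positivity
  field_simp

lemma gaussianQ_eq (x : ℝ) : gaussianQ x = ∫ t in Set.Ioi x, phiG t := rfl

lemma integrableOn_phiG (s : Set ℝ) : IntegrableOn phiG s := integrable_phiG.integrableOn

lemma gaussianQ_split {a b : ℝ} (h : a ≤ b) :
    gaussianQ a = (∫ t in a..b, phiG t) + gaussianQ b := by
  rw [gaussianQ_eq, gaussianQ_eq, intervalIntegral.integral_of_le h]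
  rw [← MeasureTheory.setIntegral_union (Set.Ioc_disjoint_Ioi le_rfl) measurableSet_Ioi
    (integrableOn_phiG _) (integrableOn_phiG _), Set.Ioc_union_Ioi_eq_Ioi h]

lemma gaussianQ_eq_sub (x y : ℝ) : gaussianQ y = gaussianQ x - ∫ t in x..y, phiG t := by
  rcases le_total x y with h | h
  · rw [gaussianQ_split h]; ring
  · rw [gaussianQ_split h, intervalIntegral.integral_symm]; ring

lemma hasDerivAt_gaussianQ (x : ℝ) : HasDerivAt gaussianQ (-phiG x) x := by
  have h : gaussianQ = fun y => gaussianQ x - ∫ t in x..y, phiG t := by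
    funext y; exact gaussianQ_eq_sub x y
  rw [h]
  have hint : HasDerivAt (fun y => ∫ t in x..y, phiG t) (phiG x) x :=
    intervalIntegral.integral_hasDerivAt_right (integrable_phiG.intervalIntegrable)
      (continuous_phiG.stronglyMeasurableAtFilter _ _) continuous_phiG.continuousAt
  exact ((hasDerivAt_const x (gaussianQ x)).sub hint).congr_deriv (by simp)

lemma setIntegral_phiG_pos {s : Set ℝ} (hs : MeasurableSet s) (hμ : 0 < volume s) :
    0 < ∫ t in s, phiG t := by
  rw [MeasureTheory.setIntegral_pos_iff_support_of_nonneg_ae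
    (Filter.Eventually.of_forall fun t => (phiG_pos t).le) (integrableOn_phiG s)]
  have : Function.support phiG = Set.univ := by
    ext t; simp [Function.mem_support, (phiG_pos t).ne']
  rwa [this, Set.univ_inter]

lemma gaussianQ_pos (x : ℝ) : 0 < gaussianQ x := by
  rw [gaussianQ_eq]
  exact setIntegral_phiG_pos measurableSet_Ioi (by simp)

lemma gaussianQ_lt_one (x : ℝ) : gaussianQ x < 1 := by
  have hsplit : (∫ t in Set.Iic x, phiG t) + (∫ t in Set.Ioi x, phiG t) = 1 := by
    rw [← MeasureTheory.setIntegral_union (Set.Iic_disjoint_Ioi le_rfl) measurableSet_Ioi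
      (integrableOn_phiG _) (integrableOn_phiG _), Set.Iic_union_Ioi, ← integral_phiG]
    exact MeasureTheory.setIntegral_univ
  have hpos : 0 < ∫ t in Set.Iic x, phiG t :=
    setIntegral_phiG_pos measurableSet_Iic (by simp)
  rw [gaussianQ_eq]; linarith


lemma hasDerivAt_phiG (x : ℝ) : HasDerivAt phiG (-x * phiG x) x := by
  unfold phiG
  have h1 : HasDerivAt (fun x : ℝ => -x ^ 2 / 2) (-x) x := by
    have := ((hasDerivAt_pow 2 x).neg).div_const 2
    simpa using this.congr_deriv (by ring)
  have h2 := (h1.exp).const_mul (Real.sqrt (2 * Real.pi))⁻¹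
  exact h2.congr_deriv (by ring)

section FBL
variable (d γ : ℝ)


lemma hasDerivAt_wf {t : ℝ} (ht : t ≠ 0) : HasDerivAt (wf d γ) (wf1 d γ t) t := by
  have h1 : HasDerivAt (fun t : ℝ => Cap γ * t - d / t) (Cap γ + d / t ^ 2) t := by
    have hi : HasDerivAt (fun t : ℝ => d / t) (-d / t ^ 2) t := by
      simpa [div_eq_mul_inv, neg_div] using ((hasDerivAt_inv ht).const_mul d)
    have := ((hasDerivAt_id t).const_mul (Cap γ)).sub hi
    exact this.congr_deriv (by ring)
  exact h1.const_mul (Ag γ)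

lemma hasDerivAt_wf1 {t : ℝ} (ht : t ≠ 0) : HasDerivAt (wf1 d γ) (wf2 d γ t) t := by
  have hi : HasDerivAt (fun t : ℝ => d / t ^ 2) (-2 * d / t ^ 3) t := by
    have h2 : HasDerivAt (fun t : ℝ => t ^ 2) (2 * t) t := by
      simpa using hasDerivAt_pow 2 t
    have := (h2.inv (pow_ne_zero 2 ht)).const_mul d
    have h3 : d * (-(2 * t) / (t ^ 2) ^ 2) = -2 * d / t ^ 3 := by
      field_simp
    simpa [div_eq_mul_inv] using this.congr_deriv h3
  have h1 : HasDerivAt (fun t : ℝ => Cap γ + d / t ^ 2) (-2 * d / t ^ 3) t := by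
    exact ((hasDerivAt_const t (Cap γ)).add hi).congr_deriv (by ring)
  exact h1.const_mul (Ag γ)

end FBL

section NPR
variable (d γb γe : ℝ)




lemma hasDerivAt_Nf {t : ℝ} (ht : t ≠ 0) : HasDerivAt (Nf d γb γe) (Nf1 d γb γe t) t := by
  have hQe : HasDerivAt (fun t => gaussianQ (wf d γe t))
      (-phiG (wf d γe t) * wf1 d γe t) t := by
    exact ((hasDerivAt_gaussianQ (wf d γe t)).comp t (hasDerivAt_wf d γe ht)).congr_deriv (by ring)
  have hQb : HasDerivAt (fun t => 1 - gaussianQ (wf d γb t))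
      (phiG (wf d γb t) * wf1 d γb t) t := by
    have := (hasDerivAt_gaussianQ (wf d γb t)).comp t (hasDerivAt_wf d γb ht)
    exact ((hasDerivAt_const t (1:ℝ)).sub this).congr_deriv (by ring)
  have := hQe.mul hQb
  exact this.congr_deriv (by unfold Nf1; ring)

lemma hasDerivAt_Nf1 {t : ℝ} (ht : t ≠ 0) : HasDerivAt (Nf1 d γb γe) (Nf2 d γb γe t) t := by
  have hwe := hasDerivAt_wf d γe ht
  have hwb := hasDerivAt_wf d γb ht
  have hQe : HasDerivAt (fun t => gaussianQ (wf d γe t))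
      (-phiG (wf d γe t) * wf1 d γe t) t := by
    exact ((hasDerivAt_gaussianQ (wf d γe t)).comp t hwe).congr_deriv (by ring)
  have hQb1 : HasDerivAt (fun t => 1 - gaussianQ (wf d γb t))
      (phiG (wf d γb t) * wf1 d γb t) t := by
    have := (hasDerivAt_gaussianQ (wf d γb t)).comp t hwb
    exact ((hasDerivAt_const t (1:ℝ)).sub this).congr_deriv (by ring)
  have hpe : HasDerivAt (fun t => phiG (wf d γe t))
      (-wf d γe t * phiG (wf d γe t) * wf1 d γe t) t := by
    have := (hasDerivAt_phiG (wf d γe t)).comp t hwe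
    exact this.congr_deriv (by ring)
  have hpb : HasDerivAt (fun t => phiG (wf d γb t))
      (-wf d γb t * phiG (wf d γb t) * wf1 d γb t) t := by
    have := (hasDerivAt_phiG (wf d γb t)).comp t hwb
    exact this.congr_deriv (by ring)
  have h1 : HasDerivAt (fun t => gaussianQ (wf d γe t) * phiG (wf d γb t) * wf1 d γb t)
      ((-phiG (wf d γe t) * wf1 d γe t) * phiG (wf d γb t) * wf1 d γb t
        + gaussianQ (wf d γe t) * (-wf d γb t * phiG (wf d γb t) * wf1 d γb t) * wf1 d γb t
        + gaussianQ (wf d γe t) * phiG (wf d γb t) * wf2 d γb t) t := by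
    have := (hQe.mul hpb).mul (hasDerivAt_wf1 d γb ht)
    exact this.congr_deriv (by simp only [Pi.mul_apply]; ring)
  have h2 : HasDerivAt
      (fun t => phiG (wf d γe t) * wf1 d γe t * (1 - gaussianQ (wf d γb t)))
      ((-wf d γe t * phiG (wf d γe t) * wf1 d γe t) * wf1 d γe t * (1 - gaussianQ (wf d γb t))
        + phiG (wf d γe t) * wf2 d γe t * (1 - gaussianQ (wf d γb t))
        + phiG (wf d γe t) * wf1 d γe t * (phiG (wf d γb t) * wf1 d γb t)) t := by
    have := (hpe.mul (hasDerivAt_wf1 d γe ht)).mul hQb1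
    exact this.congr_deriv (by simp only [Pi.mul_apply]; ring)
  have := h1.sub h2
  exact this.congr_deriv (by unfold Nf2; ring)



lemma hasDerivAt_Gf {t : ℝ} (ht : t ≠ 0) : HasDerivAt (Gf d γb γe) (Gf1 d γb γe t) t := by
  have := ((hasDerivAt_Nf1 d γb γe ht).mul (hasDerivAt_id t)).sub
    ((hasDerivAt_Nf d γb γe ht).const_mul 2)
  exact this.congr_deriv (by unfold Gf1; simp [id]; ring)

end NPR


/-- purely algebraic core of the second-derivative sign computation -/
lemma core_alg (t Qe Qb pe pb e1 b1 e2 b2 We Wb : ℝ)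
    (ht : 0 < t) (hQe0 : 0 < Qe) (hQb1 : Qb < 1) (hpe0 : 0 < pe) (hpb0 : 0 < pb)
    (he10 : 0 < e1) (hb10 : 0 < b1) (hb20 : b2 < 0) (he2b : -e2 * t ≤ 2 * e1)
    (hWe : We ≤ 0) (hWb : 0 ≤ Wb)
    (hcrit : (Qe * pb * b1 - pe * e1 * (1 - Qb)) * t = 2 * (Qe * (1 - Qb))) :
    (-2 * pe * pb * e1 * b1 - Qe * Wb * pb * b1 ^ 2 + Qe * pb * b2
        + We * pe * e1 ^ 2 * (1 - Qb) - pe * e2 * (1 - Qb)) * t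
      - (Qe * pb * b1 - pe * e1 * (1 - Qb)) < 0 := by
  have hPb : 0 < 1 - Qb := by linarith
  have hN1pos : 0 < Qe * pb * b1 - pe * e1 * (1 - Qb) := by
    nlinarith [mul_pos hQe0 hPb]
  have hkey : 1 - Qb < t * pb * b1 := by
    have h2 : Qe * ((1 - Qb) - t * pb * b1) < 0 := by
      nlinarith [mul_pos (mul_pos hpe0 he10) (mul_pos hPb ht), mul_pos hQe0 hPb]
    nlinarith [h2]
  have hA : 0 ≤ Qe * Wb * pb * b1 ^ 2 * t := by positivity
  have hB : Qe * pb * b2 * t < 0 := by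
    have : 0 < Qe * pb * t := by positivity
    nlinarith
  have hC : We * pe * e1 ^ 2 * (1 - Qb) * t ≤ 0 := by
    have h1 : 0 < pe * e1 ^ 2 * (1 - Qb) * t := by positivity
    nlinarith
  have hD : -(pe * e2 * (1 - Qb)) * t ≤ 2 * e1 * pe * (1 - Qb) := by
    have h := mul_le_mul_of_nonneg_left he2b (by positivity : (0:ℝ) ≤ pe * (1 - Qb))
    nlinarith [h]
  have hE : 2 * e1 * pe * (1 - Qb) < 2 * pe * pb * e1 * b1 * t := by
    have := mul_lt_mul_of_pos_left hkey (by positivity : (0:ℝ) < 2 * e1 * pe)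
    nlinarith [this]
  nlinarith [hA, hB, hC, hD, hE, hN1pos]

lemma core_neg (d γb γe t : ℝ) (hd : 0 < d) (ht : 0 < t)
    (hAe : 0 < Ag γe) (hAb : 0 < Ag γb) (hCe : 0 < Cap γe) (hCb : 0 < Cap γb)
    (hwe : wf d γe t ≤ 0) (hwb : 0 ≤ wf d γb t)
    (hcrit : Gf d γb γe t = 0) : Gf1 d γb γe t < 0 := by
  have he10 : 0 < wf1 d γe t := by
    unfold wf1; have : 0 < Cap γe + d / t ^ 2 := by positivity
    positivity
  have hb10 : 0 < wf1 d γb t := by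
    unfold wf1; have : 0 < Cap γb + d / t ^ 2 := by positivity
    positivity
  have hb20 : wf2 d γb t < 0 := by
    unfold wf2
    apply mul_neg_of_pos_of_neg hAb
    have h1 : 0 < 2 * d / t ^ 3 := by positivity
    have h2 : -2 * d / t ^ 3 = -(2 * d / t ^ 3) := by ring
    rw [h2]
    exact neg_lt_zero.mpr h1
  have he2b : -(wf2 d γe t) * t ≤ 2 * wf1 d γe t := by
    unfold wf2 wf1
    have ht3 : t ^ 3 = t ^ 2 * t := by ring
    have h1 : -(Ag γe * (-2 * d / t ^ 3)) * t = Ag γe * (2 * d / t ^ 2) := by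
      field_simp
    rw [h1]
    have h2 : Ag γe * (2 * d / t ^ 2) = 2 * (Ag γe * (d / t ^ 2)) := by ring
    rw [h2]
    have h3 : Ag γe * (d / t ^ 2) ≤ Ag γe * (Cap γe + d / t ^ 2) := by
      apply mul_le_mul_of_nonneg_left _ hAe.le
      linarith
    linarith
  have hcrit' : (gaussianQ (wf d γe t) * phiG (wf d γb t) * wf1 d γb t
      - phiG (wf d γe t) * wf1 d γe t * (1 - gaussianQ (wf d γb t))) * t
      = 2 * (gaussianQ (wf d γe t) * (1 - gaussianQ (wf d γb t))) := by
    unfold Gf Nf1 Nf at hcrit; linarith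
  have := core_alg t (gaussianQ (wf d γe t)) (gaussianQ (wf d γb t))
    (phiG (wf d γe t)) (phiG (wf d γb t)) (wf1 d γe t) (wf1 d γb t)
    (wf2 d γe t) (wf2 d γb t) (wf d γe t) (wf d γb t)
    ht (gaussianQ_pos _) (gaussianQ_lt_one _) (phiG_pos _) (phiG_pos _)
    he10 hb10 hb20 he2b hwe hwb hcrit'
  unfold Gf1 Nf2 Nf1
  linarith [this]


open Real Set Filter

lemma Cap_pos {γ : ℝ} (hγ : 0 < γ) : 0 < Cap γ :=
  Real.logb_pos (by norm_num) (by linarith)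

lemma Vdisp_pos {γ : ℝ} (hγ : 0 < γ) : 0 < Vdisp γ := by
  unfold Vdisp
  have h1 : (1:ℝ) < (1 + γ) ^ 2 := by nlinarith
  have h2 : ((1 + γ) ^ 2)⁻¹ < 1 := by
    rw [inv_lt_one_iff₀]; right; exact h1
  linarith

lemma Ag_pos {γ : ℝ} (hγ : 0 < γ) : 0 < Ag γ := by
  unfold Ag
  exact div_pos (Real.log_pos (by norm_num)) (Real.sqrt_pos.mpr (Vdisp_pos hγ))

lemma omega_eq_wf {d γ m : ℝ} (hγ : 0 < γ) (hm : 0 < m) :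
    ωfbl d γ m = wf d γ (Real.sqrt m) := by
  unfold ωfbl wf Ag
  have hV : 0 < Vdisp γ := Vdisp_pos hγ
  have hsm : 0 < Real.sqrt m := Real.sqrt_pos.mpr hm
  have hsV : 0 < Real.sqrt (Vdisp γ) := Real.sqrt_pos.mpr hV
  have h1 : Real.sqrt (m / Vdisp γ) = Real.sqrt m / Real.sqrt (Vdisp γ) :=
    Real.sqrt_div hm.le _
  rw [h1]
  have h2 : Real.sqrt m * Real.sqrt m = m := Real.mul_self_sqrt hm.le
  have key : Real.sqrt m * (Cap γ - d / m) = Cap γ * Real.sqrt m - d / Real.sqrt m := by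
    rw [← h2]
    field_simp
    rw [Real.sqrt_sq hsm.le]
  calc Real.sqrt m / Real.sqrt (Vdisp γ) * (Cap γ - d / m) * Real.log 2
      = Real.sqrt m * (Cap γ - d / m) * (Real.log 2 / Real.sqrt (Vdisp γ)) := by ring
    _ = (Cap γ * Real.sqrt m - d / Real.sqrt m) * (Real.log 2 / Real.sqrt (Vdisp γ)) := by
        rw [key]
    _ = Real.log 2 / Real.sqrt (Vdisp γ) * (Cap γ * Real.sqrt m - d / Real.sqrt m) := by ring

lemma wf_nonneg_iff {d γ t : ℝ} (hγ : 0 < γ) (ht : 0 < t) (h : d ≤ Cap γ * t ^ 2) :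
    0 ≤ wf d γ t := by
  unfold wf
  apply mul_nonneg (Ag_pos hγ).le
  rw [sub_nonneg, div_le_iff₀ ht]
  nlinarith

lemma wf_nonpos_iff {d γ t : ℝ} (hγ : 0 < γ) (ht : 0 < t) (h : Cap γ * t ^ 2 ≤ d) :
    wf d γ t ≤ 0 := by
  unfold wf
  apply mul_nonpos_of_nonneg_of_nonpos (Ag_pos hγ).le
  rw [sub_nonpos, le_div_iff₀ ht]
  nlinarith

section Machinery
variable {d γb γe : ℝ}

/-- On the interval, Gf once negative stays negative. -/
lemma Gf_stays_neg (hd : 0 < d) (hγe : 0 < γe) (hγ : γe < γb)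
    {s u : ℝ} (hs : s ∈ Icc (Real.sqrt (d / Cap γb)) (Real.sqrt (d / Cap γe)))
    (hu : u ∈ Icc (Real.sqrt (d / Cap γb)) (Real.sqrt (d / Cap γe)))
    (hsu : s ≤ u) (hGs : Gf d γb γe s < 0) : Gf d γb γe u < 0 := by
  have hγb : 0 < γb := hγe.trans hγ
  have hCb : 0 < Cap γb := Cap_pos hγb
  have hCe : 0 < Cap γe := Cap_pos hγe
  set t1 := Real.sqrt (d / Cap γb) with ht1def
  set t2 := Real.sqrt (d / Cap γe) with ht2def
  have ht1pos : 0 < t1 := Real.sqrt_pos.mpr (div_pos hd hCb)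
  -- positivity of points in the interval
  have hpos : ∀ z ∈ Icc t1 t2, 0 < z := fun z hz => lt_of_lt_of_le ht1pos hz.1
  -- wf sign facts on the interval
  have hwfb : ∀ z ∈ Icc t1 t2, 0 ≤ wf d γb z := by
    intro z hz
    apply wf_nonneg_iff hγb (hpos z hz)
    have h1 : t1 ^ 2 ≤ z ^ 2 := by
      apply sq_le_sq' _ hz.1
      linarith [ht1pos, hpos z hz]
    rw [ht1def, Real.sq_sqrt (div_pos hd hCb).le, div_le_iff₀ hCb] at h1
    linarith
  have hwfe : ∀ z ∈ Icc t1 t2, wf d γe z ≤ 0 := by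
    intro z hz
    apply wf_nonpos_iff hγe (hpos z hz)
    have h1 : z ^ 2 ≤ t2 ^ 2 := by
      apply sq_le_sq' _ hz.2
      have := hpos z hz
      have h2 : 0 ≤ t2 := Real.sqrt_nonneg _
      linarith
    rw [ht2def, Real.sq_sqrt (div_pos hd hCe).le] at h1
    rw [← le_div_iff₀' hCe]
    exact h1
  -- the critical point property
  have hcritprop : ∀ z ∈ Icc t1 t2, Gf d γb γe z = 0 → Gf1 d γb γe z < 0 := by
    intro z hz h0
    exact core_neg d γb γe z hd (hpos z hz) (Ag_pos hγe) (Ag_pos hγb) hCe hCb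
      (hwfe z hz) (hwfb z hz) h0
  -- now the connectedness argument
  by_contra hcon
  push_neg at hcon
  set B := {x ∈ Icc s u | 0 ≤ Gf d γb γe x} with hBdef
  have hBne : B.Nonempty := ⟨u, ⟨⟨hsu, le_rfl⟩, hcon⟩⟩
  have hIccsub : Icc s u ⊆ Icc t1 t2 := Icc_subset_Icc hs.1 hu.2
  have hGcont : ContinuousOn (Gf d γb γe) (Icc s u) := fun x hx =>
    ((hasDerivAt_Gf d γb γe (hpos x (hIccsub hx)).ne').continuousAt).continuousWithinAt
  have hBclosed : IsClosed B := by
    have : B = Icc s u ∩ (Gf d γb γe) ⁻¹' (Ici 0) := by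
      ext x; simp [hBdef, Set.mem_sep_iff, Set.mem_inter_iff, Set.mem_preimage]
    rw [this]
    exact hGcont.preimage_isClosed_of_isClosed isClosed_Icc isClosed_Ici
  have hBbdd : BddBelow B := ⟨s, fun x hx => hx.1.1⟩
  set z := sInf B with hzdef
  have hzB : z ∈ B := hBclosed.csInf_mem hBne hBbdd
  obtain ⟨⟨hsz, hzu⟩, hGz⟩ := hzB
  have hsz' : s < z := by
    rcases lt_or_eq_of_le hsz with h | h
    · exact h
    · exfalso; rw [← h] at hGz; exact absurd hGz (not_le.mpr hGs)
  have hneg : ∀ y, s ≤ y → y < z → Gf d γb γe y < 0 := by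
    intro y hy1 hy2
    by_contra hy
    push_neg at hy
    exact absurd (csInf_le hBbdd ⟨⟨hy1, hy2.le.trans hzu⟩, hy⟩) (not_le.mpr hy2)
  have hzmem : z ∈ Icc t1 t2 := hIccsub ⟨hsz, hzu⟩
  have hzpos : 0 < z := hpos z hzmem
  -- Gf z ≤ 0 from the left limit
  have hGz0 : Gf d γb γe z = 0 := by
    refine le_antisymm ?_ hGz
    have hT : Tendsto (Gf d γb γe) (nhdsWithin z (Iio z)) (nhds (Gf d γb γe z)) :=
      ((hasDerivAt_Gf d γb γe hzpos.ne').continuousAt).continuousWithinAt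
    refine le_of_tendsto hT ?_
    filter_upwards [Ioo_mem_nhdsLT hsz'] with y hy
    exact (hneg y hy.1.le hy.2).le
  have hG1 : Gf1 d γb γe z < 0 := hcritprop z hzmem hGz0
  -- slope argument: Gf is positive just to the left of z, contradiction
  have hslope := (hasDerivAt_Gf d γb γe hzpos.ne')
  rw [hasDerivAt_iff_tendsto_slope] at hslope
  have h2 : Tendsto (slope (Gf d γb γe) z) (nhdsWithin z (Iio z)) (nhds (Gf1 d γb γe z)) :=
    hslope.mono_left (nhdsWithin_mono _ (fun x hx => ne_of_lt hx))
  have h3 : ∀ᶠ y in nhdsWithin z (Iio z), slope (Gf d γb γe) z y < 0 :=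
    h2.eventually (eventually_lt_nhds hG1)
  have h4 := h3.and (Ioo_mem_nhdsLT hsz' : Ioo s z ∈ nhdsWithin z (Iio z))
  obtain ⟨y, hy1, hy2⟩ := h4.exists
  -- slope (Gf) z y = (Gf y - Gf z)/(y - z) < 0, with y < z gives Gf y > Gf z = 0
  have hylt : y < z := hy2.2
  have hyneg : Gf d γb γe y < 0 := hneg y hy2.1.le hylt
  rw [slope_def_field] at hy1
  have hd0 : y - z < 0 := by linarith
  rw [div_neg_iff] at hy1
  rcases hy1 with ⟨hp, hq⟩ | ⟨hp, hq⟩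
  · linarith
  · rw [hGz0] at hp; linarith
end Machinery

section Final
variable {d γb γe : ℝ}

lemma target_eq (hγb : 0 < γb) (hγe : 0 < γe) {m : ℝ} (hm : 0 < m) :
    d / m * (1 - (gaussianQ (ωfbl d γb m) * gaussianQ (ωfbl d γe m) +
        (1 - gaussianQ (ωfbl d γe m))))
      = d / m * Nf d γb γe (Real.sqrt m) := by
  rw [omega_eq_wf hγb hm, omega_eq_wf hγe hm]
  unfold Nf
  ring

lemma hasDerivAt_target (hγb : 0 < γb) (hγe : 0 < γe) {m : ℝ} (hm : 0 < m) :
    HasDerivAt (fun m => d / m *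
        (1 - (gaussianQ (ωfbl d γb m) * gaussianQ (ωfbl d γe m) +
          (1 - gaussianQ (ωfbl d γe m)))))
      (d * Gf d γb γe (Real.sqrt m) / (2 * m ^ 2)) m := by
  have hsm : 0 < Real.sqrt m := Real.sqrt_pos.mpr hm
  have h0 : HasDerivAt (fun x : ℝ => Real.sqrt x) (1 / (2 * Real.sqrt m)) m :=
    Real.hasDerivAt_sqrt hm.ne'
  have hN : HasDerivAt (fun m => Nf d γb γe (Real.sqrt m))
      (Nf1 d γb γe (Real.sqrt m) * (1 / (2 * Real.sqrt m))) m :=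
    (hasDerivAt_Nf d γb γe hsm.ne').comp m h0
  have hdm : HasDerivAt (fun m : ℝ => d / m) (-(d / m ^ 2)) m := by
    have := (hasDerivAt_inv hm.ne').const_mul d
    simpa [div_eq_mul_inv] using this.congr_deriv (by field_simp)
  have hprod := hdm.mul hN
  have heq : -(d / m ^ 2) * Nf d γb γe (Real.sqrt m)
      + d / m * (Nf1 d γb γe (Real.sqrt m) * (1 / (2 * Real.sqrt m)))
      = d * Gf d γb γe (Real.sqrt m) / (2 * m ^ 2) := by
    unfold Gf
    have ht2 : Real.sqrt m * Real.sqrt m = m := Real.mul_self_sqrt hm.le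
    rw [show m = Real.sqrt m * Real.sqrt m from ht2.symm]
    field_simp
    rw [Real.sqrt_sq hsm.le]
    ring
  have hEv : (fun m => d / m *
      (1 - (gaussianQ (ωfbl d γb m) * gaussianQ (ωfbl d γe m) +
        (1 - gaussianQ (ωfbl d γe m)))))
      =ᶠ[nhds m] (fun m => d / m * Nf d γb γe (Real.sqrt m)) := by
    filter_upwards [Ioi_mem_nhds hm] with x hx
    exact target_eq hγb hγe hx
  rw [hEv.hasDerivAt_iff]
  exact (heq ▸ hprod)

/-- paper's Corollary 2: for packet size `d > 0` and SNRs
`γ_b > γ_e > 0`, the secrecy effective throughput `τ_LF(m) = (d/m)·(1 − ε_LF(m))`,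
where `ε_LF(m) = Q(ω_b(m))·Q(ω_e(m)) + (1 − Q(ω_e(m)))`, is quasiconcave in the
blocklength `m` on `[d / C(γ_b), d / C(γ_e)]`. -/
theorem statement16 (d γb γe : ℝ) (hd : 0 < d) (hγe : 0 < γe) (hγ : γe < γb) :
    QuasiconcaveOn ℝ (Set.Icc (d / Cap γb) (d / Cap γe))
      (fun m => d / m *
        (1 - (gaussianQ (ωfbl d γb m) * gaussianQ (ωfbl d γe m) +
          (1 - gaussianQ (ωfbl d γe m))))) := by
  have hγb : 0 < γb := hγe.trans hγ
  have hCb : 0 < Cap γb := Cap_pos hγb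
  have hCe : 0 < Cap γe := Cap_pos hγe
  set F := fun m => d / m *
      (1 - (gaussianQ (ωfbl d γb m) * gaussianQ (ωfbl d γe m) +
        (1 - gaussianQ (ωfbl d γe m)))) with hFdef
  set m1 := d / Cap γb with hm1def
  set m2 := d / Cap γe with hm2def
  have hm1pos : 0 < m1 := div_pos hd hCb
  have hm2pos : 0 < m2 := div_pos hd hCe
  set t1 := Real.sqrt m1 with ht1def
  set t2 := Real.sqrt m2 with ht2def
  have ht1pos : 0 < t1 := Real.sqrt_pos.mpr hm1pos
  have hsq1 : t1 ^ 2 = m1 := Real.sq_sqrt hm1pos.le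
  have hsq2 : t2 ^ 2 = m2 := Real.sq_sqrt hm2pos.le
  -- split point
  obtain ⟨c, hcmem, hup, hdn⟩ : ∃ c ∈ Icc t1 t2,
      (∀ z ∈ Icc t1 t2, z < c → 0 ≤ Gf d γb γe z) ∧
      (∀ z ∈ Icc t1 t2, c < z → Gf d γb γe z < 0) := by
    by_cases hD : {z ∈ Icc t1 t2 | Gf d γb γe z < 0}.Nonempty
    · set D := {z ∈ Icc t1 t2 | Gf d γb γe z < 0} with hDdef
      have hDbdd : BddBelow D := ⟨t1, fun x hx => hx.1.1⟩
      set c := sInf D with hcdef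
      have hD' := hD
      obtain ⟨u0, hu0⟩ := hD'
      have hct1 : t1 ≤ c := le_csInf hD (fun x hx => hx.1.1)
      have hct2 : c ≤ t2 := (csInf_le hDbdd hu0).trans hu0.1.2
      refine ⟨c, ⟨hct1, hct2⟩, ?_, ?_⟩
      · intro z hz hzc
        by_contra h
        push_neg at h
        exact absurd (csInf_le hDbdd ⟨hz, h⟩) (not_le.mpr hzc)
      · intro z hz hcz
        obtain ⟨s, hsD, hsz⟩ := exists_lt_of_csInf_lt hD hcz
        exact Gf_stays_neg hd hγe hγ hsD.1 hz hsz.le hsD.2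
    · have hm12 : m1 ≤ m2 := by
        rw [hm1def, hm2def]
        have hCC : Cap γe ≤ Cap γb := by
          unfold Cap
          exact Real.logb_le_logb_of_le (by norm_num) (by linarith) (by linarith)
        exact div_le_div_of_nonneg_left hd.le hCe hCC
      refine ⟨t2, ⟨Real.sqrt_le_sqrt hm12, le_rfl⟩, ?_, ?_⟩
      · intro z hz _
        by_contra h
        push_neg at h
        exact hD ⟨z, hz, h⟩
      · intro z hz hcz
        exact absurd hz.2 (not_le.mpr hcz)
  -- now build monotone/antitone pieces in m-space
  set cm := c ^ 2 with hcmdef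
  have hc0 : 0 ≤ c := le_trans ht1pos.le hcmem.1
  have hscm : Real.sqrt cm = c := Real.sqrt_sq hc0
  have hm1cm : m1 ≤ cm := by
    rw [← hsq1, hcmdef]
    exact pow_le_pow_left₀ ht1pos.le hcmem.1 2
  have hcmm2 : cm ≤ m2 := by
    rw [← hsq2, hcmdef]
    exact pow_le_pow_left₀ hc0 hcmem.2 2
  -- sqrt maps [m1,m2] into [t1,t2]
  have hsqrt_mem : ∀ x, m1 ≤ x → x ≤ m2 → Real.sqrt x ∈ Icc t1 t2 := by
    intro x h1 h2
    exact ⟨Real.sqrt_le_sqrt h1, Real.sqrt_le_sqrt h2⟩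
  have hmono : MonotoneOn F (Icc m1 cm) := by
    apply monotoneOn_of_deriv_nonneg (convex_Icc _ _)
    · intro x hx
      have hx0 : 0 < x := lt_of_lt_of_le hm1pos hx.1
      exact (hasDerivAt_target hγb hγe hx0).continuousAt.continuousWithinAt
    · intro x hx
      rw [interior_Icc] at hx
      have hx0 : 0 < x := lt_of_lt_of_le hm1pos hx.1.le
      exact (hasDerivAt_target hγb hγe hx0).differentiableAt.differentiableWithinAt
    · intro x hx
      rw [interior_Icc] at hx
      have hx0 : 0 < x := lt_of_lt_of_le hm1pos hx.1.le
      rw [(hasDerivAt_target hγb hγe hx0).deriv]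
      have hGnn : 0 ≤ Gf d γb γe (Real.sqrt x) := by
        apply hup _ (hsqrt_mem x hx.1.le (hx.2.le.trans hcmm2))
        calc Real.sqrt x < Real.sqrt cm := Real.sqrt_lt_sqrt hx0.le hx.2
          _ = c := hscm
      positivity
  have hanti : AntitoneOn F (Icc cm m2) := by
    apply antitoneOn_of_deriv_nonpos (convex_Icc _ _)
    · intro x hx
      have hx0 : 0 < x := lt_of_lt_of_le (lt_of_lt_of_le hm1pos hm1cm) hx.1
      exact (hasDerivAt_target hγb hγe hx0).continuousAt.continuousWithinAt
    · intro x hx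
      rw [interior_Icc] at hx
      have hx0 : 0 < x := lt_of_lt_of_le (lt_of_lt_of_le hm1pos hm1cm) hx.1.le
      exact (hasDerivAt_target hγb hγe hx0).differentiableAt.differentiableWithinAt
    · intro x hx
      rw [interior_Icc] at hx
      have hx0 : 0 < x := lt_of_lt_of_le (lt_of_lt_of_le hm1pos hm1cm) hx.1.le
      rw [(hasDerivAt_target hγb hγe hx0).deriv]
      have hGneg : Gf d γb γe (Real.sqrt x) < 0 := by
        apply hdn _ (hsqrt_mem x (hm1cm.trans hx.1.le) hx.2.le)
        calc c = Real.sqrt cm := hscm.symm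
          _ < Real.sqrt x := Real.sqrt_lt_sqrt (by positivity) hx.1
      have hx2 : 0 < 2 * x ^ 2 := by positivity
      apply div_nonpos_of_nonpos_of_nonneg _ hx2.le
      nlinarith [hGneg, hd]
  -- conclude quasiconcavity
  intro r
  rw [convex_iff_ordConnected]
  constructor
  rintro x ⟨⟨hxm1, hxm2⟩, hxr⟩ y ⟨⟨hym1, hym2⟩, hyr⟩ z hz
  obtain ⟨hxz, hzy⟩ := hz
  have hzm1 : m1 ≤ z := hxm1.trans hxz
  have hzm2 : z ≤ m2 := hzy.trans hym2
  refine ⟨⟨hzm1, hzm2⟩, ?_⟩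
  rcases le_total z cm with hzc | hzc
  · have hFx : F x ≤ F z := hmono ⟨hxm1, hxz.trans hzc⟩ ⟨hzm1, hzc⟩ hxz
    linarith
  · have hFy : F y ≤ F z := hanti ⟨hzc, hzm2⟩ ⟨hzc.trans hzy, hym2⟩ hzy
    linarith
end Final
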